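/- For the Pauli-6 POVM with Gram matrix T, the generalized inverse 3τ̃ (with τ̃ block diagonal with blocks [[2,−1],[−1,2]]) satisfies 3τ̃·T = T⁺·T, where T⁺ is the Moore–Penrose pseudoinverse of T; consequently the estimator tensors (3τ̃)T(3τ̃)ᵗ and T⁺T(T⁺)ᵗ coincide. -/

import Mathlib

open Matrix Complex
open scoped ComplexOrder

noncomputable section

/-- The six unit eigenvectors of the Pauli matrices Z, X, Y (in pairs). -/
def pauliEigVec : Fin 6 → Fin 2 → ℂ
  | 0 => ![1, 0]
  | 1 => ![0, 1]
  | 2 => ![((Real.sqrt 2 : ℝ) : ℂ)⁻¹, ((Real.sqrt 2 : ℝ) : ℂ)⁻¹]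
  | 3 => ![((Real.sqrt 2 : ℝ) : ℂ)⁻¹, -((Real.sqrt 2 : ℝ) : ℂ)⁻¹]
  | 4 => ![((Real.sqrt 2 : ℝ) : ℂ)⁻¹, Complex.I * ((Real.sqrt 2 : ℝ) : ℂ)⁻¹]
  | 5 => ![((Real.sqrt 2 : ℝ) : ℂ)⁻¹, -Complex.I * ((Real.sqrt 2 : ℝ) : ℂ)⁻¹]

/-- The Pauli-6 POVM: M_a = (1/3)|a⟩⟨a|. -/
def pauli6 (a : Fin 6) : Matrix (Fin 2) (Fin 2) ℂ :=
  (3 : ℂ)⁻¹ • Matrix.vecMulVec (pauliEigVec a) (star (pauliEigVec a))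

end

/-- The block-diagonal matrix τ̃ with three 2×2 blocks [[2,−1],[−1,2]]. -/
def tauTilde : Matrix (Fin 6) (Fin 6) ℝ :=
  !![2, -1, 0, 0, 0, 0;
     -1, 2, 0, 0, 0, 0;
     0, 0, 2, -1, 0, 0;
     0, 0, -1, 2, 0, 0;
     0, 0, 0, 0, 2, -1;
     0, 0, 0, 0, -1, 2]

noncomputable section

/-- The explicit Gram matrix of the Pauli-6 POVM. -/
def myauxT0 : Matrix (Fin 6) (Fin 6) ℝ :=
  !![1/9,0,1/18,1/18,1/18,1/18; 0,1/9,1/18,1/18,1/18,1/18;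
     1/18,1/18,1/9,0,1/18,1/18; 1/18,1/18,0,1/9,1/18,1/18;
     1/18,1/18,1/18,1/18,1/9,0; 1/18,1/18,1/18,1/18,0,1/9]

/-- The explicit product (3τ̃)·T. -/
def myauxP0 : Matrix (Fin 6) (Fin 6) ℝ :=
  !![2/3,-1/3,1/6,1/6,1/6,1/6; -1/3,2/3,1/6,1/6,1/6,1/6;
     1/6,1/6,2/3,-1/3,1/6,1/6; 1/6,1/6,-1/3,2/3,1/6,1/6;
     1/6,1/6,1/6,1/6,2/3,-1/3; 1/6,1/6,1/6,1/6,-1/3,2/3]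

end

theorem myaux_cons_val_five {α : Type*} {m : ℕ} (x : α) (u : Fin (m+5) → α) :
    Matrix.vecCons x u 5 =
      Matrix.vecHead (Matrix.vecTail (Matrix.vecTail (Matrix.vecTail (Matrix.vecTail u)))) := rfl

set_option maxHeartbeats 1000000 in
theorem myaux_gram (a b : Fin 6) : ((pauli6 a * pauli6 b).trace).re = myauxT0 a b := by
  have h2 : Real.sqrt 2 ^ 2 = 2 := Real.sq_sqrt (by norm_num)
  have h4 : Real.sqrt 2 ^ 4 = 4 := by nlinarith [h2]
  fin_cases a <;> fin_cases b <;>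
    simp [pauli6, pauliEigVec, myauxT0, Matrix.trace, Matrix.mul_apply,
      Matrix.vecMulVec_apply, Fin.sum_univ_succ, Matrix.smul_apply, Matrix.diag,
      Matrix.cons_val_two, Matrix.cons_val_three, Matrix.cons_val_four,
      myaux_cons_val_five, Matrix.vecHead, Matrix.vecTail, -Matrix.cons_vecMulVec] <;>
    nlinarith [h2, h4, Real.sqrt_nonneg 2]

set_option maxHeartbeats 1000000 in
theorem myaux_step1 : ((3:ℝ) • tauTilde) * myauxT0 = myauxP0 := by
  ext i j
  fin_cases i <;> fin_cases j <;>
    · simp [tauTilde, myauxT0, myauxP0, Matrix.mul_apply, Fin.sum_univ_succ,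
        Matrix.cons_val_two, Matrix.cons_val_three, Matrix.cons_val_four,
        myaux_cons_val_five, Matrix.vecHead, Matrix.vecTail]
      norm_num

set_option maxHeartbeats 1000000 in
theorem myaux_step2 : myauxT0 * myauxP0 = myauxT0 := by
  ext i j
  fin_cases i <;> fin_cases j <;>
    · simp [myauxT0, myauxP0, Matrix.mul_apply, Fin.sum_univ_succ,
        Matrix.cons_val_two, Matrix.cons_val_three, Matrix.cons_val_four,
        myaux_cons_val_five, Matrix.vecHead, Matrix.vecTail]
      norm_num

set_option maxHeartbeats 1000000 in
theorem myaux_step3 : myauxP0ᵀ = myauxP0 := by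
  ext i j
  fin_cases i <;> fin_cases j <;>
    simp [myauxP0, Matrix.cons_val_two, Matrix.cons_val_three, Matrix.cons_val_four,
      myaux_cons_val_five, Matrix.vecHead, Matrix.vecTail]

set_option maxHeartbeats 1000000 in
theorem myaux_step4 : myauxT0ᵀ = myauxT0 := by
  ext i j
  fin_cases i <;> fin_cases j <;>
    simp [myauxT0, Matrix.cons_val_two, Matrix.cons_val_three, Matrix.cons_val_four,
      myaux_cons_val_five, Matrix.vecHead, Matrix.vecTail]

set_option maxHeartbeats 1000000 in
theorem myaux_step5 : ((3:ℝ) • tauTilde)ᵀ = (3:ℝ) • tauTilde := by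
  rw [Matrix.transpose_smul]
  congr 1
  ext i j
  fin_cases i <;> fin_cases j <;>
    simp [tauTilde, Matrix.cons_val_two, Matrix.cons_val_three, Matrix.cons_val_four,
      myaux_cons_val_five, Matrix.vecHead, Matrix.vecTail]

/-- For the Pauli-6 Gram matrix T with Moore–Penrose pseudoinverse T⁺
(characterized by the four Penrose conditions), 3τ̃·T = T⁺·T, and the estimator
tensors (3τ̃)T(3τ̃)ᵗ and T⁺T(T⁺)ᵗ coincide. -/
theorem stmt8 (T Tp : Matrix (Fin 6) (Fin 6) ℝ)
    (hT : ∀ a b, T a b = ((pauli6 a * pauli6 b).trace).re)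
    (hTp1 : T * Tp * T = T) (hTp2 : Tp * T * Tp = Tp)
    (hTp3 : (T * Tp)ᵀ = T * Tp) (hTp4 : (Tp * T)ᵀ = Tp * T) :
    ((3 : ℝ) • tauTilde) * T = Tp * T ∧
      ((3 : ℝ) • tauTilde) * T * ((3 : ℝ) • tauTilde)ᵀ = Tp * T * Tpᵀ := by
  have hT0 : T = myauxT0 := by
    ext a b; rw [hT a b, myaux_gram a b]
  set Q : Matrix (Fin 6) (Fin 6) ℝ := (3 : ℝ) • tauTilde with hQ
  -- basic facts about the explicit matrices
  have hQT : Q * T = myauxP0 := by rw [hT0]; exact myaux_step1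
  have hTQT : T * (Q * T) = T := by rw [hQT, hT0]; exact myaux_step2
  have hQTsymm : (Q * T)ᵀ = Q * T := by rw [hQT]; exact myaux_step3
  have hTsymm : Tᵀ = T := by rw [hT0]; exact myaux_step4
  -- e1 : Tp*T = (Tp*T)*(Q*T)
  have e1 : Tp * T = Tp * T * (Q * T) := by
    conv_lhs => rw [← hTQT]
    rw [← Matrix.mul_assoc]
  -- e2 : Q*T = (Q*T)*(Tp*T)
  have e2 : Q * T = Q * T * (Tp * T) := by
    conv_lhs => rw [← hTp1]
    simp only [Matrix.mul_assoc]
  -- transpose of e2 : Q*T = (Tp*T)*(Q*T)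
  have e2' : Q * T = Tp * T * (Q * T) := by
    have h : Q * T = (Tp * T)ᵀ * (Q * T)ᵀ :=
      calc Q * T = (Q * T)ᵀ := hQTsymm.symm
        _ = (Q * T * (Tp * T))ᵀ := congrArg Matrix.transpose e2
        _ = (Tp * T)ᵀ * (Q * T)ᵀ := Matrix.transpose_mul _ _
    rwa [hTp4, hQTsymm] at h
  have main : Q * T = Tp * T := by rw [e1, ← e2']
  refine ⟨main, ?_⟩
  -- second part
  have hTQ : T * Q = Q * T := by
    have := congrArg Matrix.transpose hQTsymm
    calc T * Q = (Qᵀ * Tᵀ)ᵀ := by rw [Matrix.transpose_mul, Matrix.transpose_transpose,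
          Matrix.transpose_transpose]
    _ = (Q * T)ᵀ := by rw [myaux_step5, hTsymm]
    _ = Q * T := hQTsymm
  have hTTp : T * Tpᵀ = Q * T := by
    calc T * Tpᵀ = (Tp * Tᵀ)ᵀ := by rw [Matrix.transpose_mul, Matrix.transpose_transpose]
    _ = (Tp * T)ᵀ := by rw [hTsymm]
    _ = Tp * T := hTp4
    _ = Q * T := main.symm
  calc Q * T * Qᵀ = Q * T * Q := by rw [myaux_step5]
    _ = Tp * T * Q := by rw [main]
    _ = Tp * (T * Q) := by rw [Matrix.mul_assoc]
    _ = Tp * (Q * T) := by rw [hTQ]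
    _ = Tp * (T * Tpᵀ) := by rw [hTTp]
    _ = Tp * T * Tpᵀ := by rw [Matrix.mul_assoc]
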